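/- For every real K > 0 there exists a real C > 0 such that for every real t ≥ 1, the series ∑_{ℓ=1}^∞ exp(−(t² + 16^{ℓ−1})/(K·8^ℓ)) converges and satisfies ∑_{ℓ=1}^∞ exp(−(t² + 16^{ℓ−1})/(K·8^ℓ)) ≤ C·exp(−√t / C). -/

import Mathlib

/-- Summation estimate: for every `K > 0` there is `C > 0` such that for all `t ≥ 1`,
`∑_{ℓ=1}^∞ exp(-(t² + 16^{ℓ-1})/(K 8^ℓ)) ≤ C exp(-√t / C)` (and the series converges). -/
theorem dyadic_tail_sum_bound (K : ℝ) (hK : 0 < K) :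
    ∃ C : ℝ, 0 < C ∧ ∀ t : ℝ, 1 ≤ t →
      Summable (fun ℓ : ℕ => Real.exp (-(t ^ 2 + 16 ^ ℓ) / (K * 8 ^ (ℓ + 1)))) ∧
        (∑' ℓ : ℕ, Real.exp (-(t ^ 2 + 16 ^ ℓ) / (K * 8 ^ (ℓ + 1)))) ≤
          C * Real.exp (-Real.sqrt t / C) := by
  set a : ℝ := 16 * K with ha
  have ha0 : (0:ℝ) < a := by positivity
  set r : ℝ := Real.exp (-1 / a) with hr
  have hr0 : 0 < r := Real.exp_pos _
  have hr1 : r < 1 := by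
    rw [hr]
    apply Real.exp_lt_one_iff.mpr
    rw [neg_div]
    simp only [Left.neg_neg_iff]
    positivity
  have h1r : 0 < 1 - r := by linarith
  refine ⟨a + 1 / (1 - r), by positivity, fun t ht => ?_⟩
  have ht0 : 0 < t := by linarith
  have hs1 : 1 ≤ Real.sqrt t := by
    rw [show (1:ℝ) = Real.sqrt 1 by simp]
    exact Real.sqrt_le_sqrt ht
  have hs0 : 0 ≤ Real.sqrt t := Real.sqrt_nonneg t
  have hst : Real.sqrt t * Real.sqrt t = t := Real.mul_self_sqrt ht0.le
  -- key pointwise bound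
  have key : ∀ ℓ : ℕ, Real.exp (-(t ^ 2 + 16 ^ ℓ) / (K * 8 ^ (ℓ + 1))) ≤
      Real.exp (-Real.sqrt t / a) * r ^ ℓ := by
    intro ℓ
    have hp0 : (0:ℝ) < 2 ^ ℓ := by positivity
    have h16 : (16:ℝ) ^ ℓ = ((2:ℝ) ^ ℓ) ^ 4 := by
      rw [← pow_mul, mul_comm, pow_mul]; norm_num
    have h8 : (8:ℝ) ^ ℓ = ((2:ℝ) ^ ℓ) ^ 3 := by
      rw [← pow_mul, mul_comm, pow_mul]; norm_num
    have step1 : Real.exp (-(t ^ 2 + 16 ^ ℓ) / (K * 8 ^ (ℓ + 1))) ≤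
        Real.exp (-(Real.sqrt t + 2 ^ ℓ) / a) := by
      apply Real.exp_le_exp.mpr
      rw [neg_div, neg_div, neg_le_neg_iff]
      rw [div_le_div_iff₀ ha0 (by positivity)]
      have hexp : (Real.sqrt t + 2 ^ ℓ) * (K * 8 ^ (ℓ + 1)) =
          K * ((Real.sqrt t + 2 ^ ℓ) * (8 * 8 ^ ℓ)) := by ring
      have hexp2 : (t ^ 2 + 16 ^ ℓ) * a = K * (16 * (t ^ 2 + 16 ^ ℓ)) := by
        rw [ha]; ring
      rw [hexp, hexp2]
      apply mul_le_mul_of_nonneg_left _ hK.le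
      rw [h16, h8]
      have h2 : t = Real.sqrt t * Real.sqrt t := hst.symm
      nlinarith [sq_nonneg (Real.sqrt t - 2 ^ ℓ), sq_nonneg (Real.sqrt t + 2 ^ ℓ),
        sq_nonneg (Real.sqrt t * Real.sqrt t - (2:ℝ) ^ ℓ * 2 ^ ℓ),
        sq_nonneg (Real.sqrt t * 2 ^ ℓ - (2:ℝ) ^ ℓ * 2 ^ ℓ),
        mul_pos hp0 hp0, mul_nonneg hs0 hp0.le, sq_nonneg (Real.sqrt t - 2^ℓ * 2^ℓ)]
    have step2 : Real.exp (-(Real.sqrt t + 2 ^ ℓ) / a) =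
        Real.exp (-Real.sqrt t / a) * Real.exp (-(2:ℝ) ^ ℓ / a) := by
      rw [← Real.exp_add]; ring_nf
    have step3 : Real.exp (-(2:ℝ) ^ ℓ / a) ≤ r ^ ℓ := by
      have hrl : r ^ ℓ = Real.exp ((ℓ : ℝ) * (-1 / a)) := by
        rw [hr, Real.exp_nat_mul]
      rw [hrl]
      apply Real.exp_le_exp.mpr
      have hlb : (ℓ : ℝ) ≤ 2 ^ ℓ := by
        calc (ℓ : ℝ) ≤ ((2 ^ ℓ : ℕ) : ℝ) := by exact_mod_cast (Nat.lt_two_pow_self (n := ℓ)).le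
        _ = 2 ^ ℓ := by push_cast; ring
      rw [show (ℓ:ℝ) * (-1/a) = -((ℓ:ℝ)/a) by ring, show -(2:ℝ)^ℓ/a = -((2:ℝ)^ℓ/a) by ring,
        neg_le_neg_iff]
      gcongr
    calc Real.exp (-(t ^ 2 + 16 ^ ℓ) / (K * 8 ^ (ℓ + 1)))
        ≤ Real.exp (-(Real.sqrt t + 2 ^ ℓ) / a) := step1
      _ = Real.exp (-Real.sqrt t / a) * Real.exp (-(2:ℝ) ^ ℓ / a) := step2
      _ ≤ Real.exp (-Real.sqrt t / a) * r ^ ℓ := by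
          exact mul_le_mul_of_nonneg_left step3 (Real.exp_pos _).le
  have hgeom : Summable (fun ℓ : ℕ => Real.exp (-Real.sqrt t / a) * r ^ ℓ) :=
    (summable_geometric_of_lt_one hr0.le hr1).mul_left _
  have hsummable : Summable (fun ℓ : ℕ => Real.exp (-(t ^ 2 + 16 ^ ℓ) / (K * 8 ^ (ℓ + 1)))) := by
    apply Summable.of_nonneg_of_le (fun ℓ => (Real.exp_pos _).le) key hgeom
  refine ⟨hsummable, ?_⟩
  have htsum : (∑' ℓ : ℕ, Real.exp (-(t ^ 2 + 16 ^ ℓ) / (K * 8 ^ (ℓ + 1)))) ≤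
      Real.exp (-Real.sqrt t / a) * (1 / (1 - r)) := by
    calc (∑' ℓ : ℕ, Real.exp (-(t ^ 2 + 16 ^ ℓ) / (K * 8 ^ (ℓ + 1))))
        ≤ ∑' ℓ : ℕ, Real.exp (-Real.sqrt t / a) * r ^ ℓ :=
          Summable.tsum_le_tsum key hsummable hgeom
      _ = Real.exp (-Real.sqrt t / a) * ∑' ℓ : ℕ, r ^ ℓ := tsum_mul_left
      _ = Real.exp (-Real.sqrt t / a) * (1 / (1 - r)) := by
          rw [tsum_geometric_of_lt_one hr0.le hr1, one_div]
  refine htsum.trans ?_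
  have hinv : 0 < 1 / (1 - r) := by positivity
  have hC : a ≤ a + 1 / (1 - r) := by linarith
  have hexpC : Real.exp (-Real.sqrt t / a) ≤ Real.exp (-Real.sqrt t / (a + 1 / (1 - r))) := by
    apply Real.exp_le_exp.mpr
    rw [neg_div, neg_div, neg_le_neg_iff]
    gcongr
  have h1C : 1 / (1 - r) ≤ a + 1 / (1 - r) := by linarith
  calc Real.exp (-Real.sqrt t / a) * (1 / (1 - r))
      ≤ Real.exp (-Real.sqrt t / (a + 1 / (1 - r))) * (a + 1 / (1 - r)) := by
        apply mul_le_mul hexpC h1C (by positivity) (Real.exp_pos _).le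
    _ = (a + 1 / (1 - r)) * Real.exp (-Real.sqrt t / (a + 1 / (1 - r))) := mul_comm _ _
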